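/- arXiv:1306.2712 — 2 statements merged into one kernel-verified Lean document; each statement's English description precedes it below -/
import Mathlib

section
/- Let S = {(p_i, |Ψ_i⟩)} be an ensemble of maximally entangled states in ℂ^{d₁} ⊗ ℂ^{d₂} with d₁ ≤ d₂ (each having Schmidt rank d₁ with all Schmidt coefficients 1/√d₁). Then the separable fidelity satisfies F_S ≤ d₂ · ‖ρ‖_∞, where ρ = Σ_i p_i |Ψ_i⟩⟨Ψ_i|. -/
open Matrix
open scoped BigOperators ComplexOrder

noncomputable section

/-- Product vector `|a⟩⊗|b⟩` in `ℂ^{d₁} ⊗ ℂ^{d₂}`. -/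
def prodv {d₁ d₂ : ℕ} (a : Fin d₁ → ℂ) (b : Fin d₂ → ℂ) : Fin d₁ × Fin d₂ → ℂ :=
  fun y => a y.1 * b y.2

/-- Reduced density matrix of `|ψ⟩⟨ψ|` on the first factor. -/
def red₁ {d₁ d₂ : ℕ} (ψ : Fin d₁ × Fin d₂ → ℂ) : Matrix (Fin d₁) (Fin d₁) ℂ :=
  fun i i' => ∑ j, ψ (i, j) * star (ψ (i', j))

/-- The set of average fidelities achievable by (rank-one) separable measurements
together with guessing strategies; its supremum is the separable fidelity `F_S`. -/
def sepFidSet {d₁ d₂ : ℕ} (N : ℕ) (p : Fin N → ℝ)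
    (ψ : Fin N → (Fin d₁ × Fin d₂ → ℂ)) : Set ℝ :=
  {x : ℝ | ∃ (A : ℕ) (m : Fin A → ℝ) (χ₁ : Fin A → Fin d₁ → ℂ)
      (χ₂ : Fin A → Fin d₂ → ℂ) (φ : Fin A → (Fin d₁ × Fin d₂ → ℂ)),
    (∀ a, 0 < m a) ∧ (∀ a, star (φ a) ⬝ᵥ φ a = 1) ∧
    (∑ a, (m a : ℂ) • Matrix.vecMulVec (prodv (χ₁ a) (χ₂ a))
        (star (prodv (χ₁ a) (χ₂ a))) = 1) ∧
    x = ∑ a, ∑ i, p i * m a *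
          ‖star (ψ i) ⬝ᵥ prodv (χ₁ a) (χ₂ a)‖^2 *
          ‖star (ψ i) ⬝ᵥ φ a‖^2}

/-- Cauchy-Schwarz for complex sums. -/
lemma aux_cs {ι : Type*} [Fintype ι] (x y : ι → ℂ) :
    (‖∑ j, x j * y j‖)^2 ≤
      (∑ j, Complex.normSq (x j)) * (∑ j, Complex.normSq (y j)) := by
  have h1 : ‖∑ j, x j * y j‖ ≤ ∑ j, ‖x j‖ * ‖y j‖ := by
    refine le_trans (norm_sum_le _ _) (le_of_eq ?_)
    simp [_root_.map_mul]
  have h2 := Finset.sum_mul_sq_le_sq_mul_sq Finset.univ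
    (fun j => ‖x j‖) (fun j => ‖y j‖)
  calc (‖∑ j, x j * y j‖)^2
      ≤ (∑ j, ‖x j‖ * ‖y j‖)^2 := by
        apply pow_le_pow_left₀ (norm_nonneg _) h1
    _ ≤ (∑ j, ‖x j‖^2) * (∑ j, ‖y j‖^2) := h2
    _ = _ := by simp [Complex.sq_norm]

/-- key computation using the maximally entangled hypothesis -/
lemma aux_red {d₁ d₂ : ℕ} (ψ : Fin d₁ × Fin d₂ → ℂ)
    (hm : red₁ ψ = ((d₁ : ℂ))⁻¹ • 1) (a : Fin d₁ → ℂ) :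
    ∑ j, Complex.normSq (∑ i, (starRingEnd ℂ) (ψ (i, j)) * a i)
      = (d₁ : ℝ)⁻¹ * ∑ i, Complex.normSq (a i) := by
  have key : ∀ i i', (∑ j, (starRingEnd ℂ) (ψ (i, j)) * ψ (i', j))
      = (starRingEnd ℂ) (((d₁ : ℂ))⁻¹ * (1 : Matrix (Fin d₁) (Fin d₁) ℂ) i i') := by
    intro i i'
    have := congrFun (congrFun hm i) i'
    simp only [red₁, Matrix.smul_apply, smul_eq_mul] at this
    rw [← this]
    simp only [map_sum, _root_.map_mul]
    simp [mul_comm]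
  have hc : ((∑ j, Complex.normSq (∑ i, (starRingEnd ℂ) (ψ (i, j)) * a i) : ℝ) : ℂ)
      = (((d₁ : ℝ)⁻¹ * ∑ i, Complex.normSq (a i) : ℝ) : ℂ) := by
    push_cast
    calc (∑ j, (Complex.normSq (∑ i, (starRingEnd ℂ) (ψ (i, j)) * a i) : ℂ))
        = ∑ j, (∑ i, (starRingEnd ℂ) (ψ (i, j)) * a i) *
            (starRingEnd ℂ) (∑ i', (starRingEnd ℂ) (ψ (i', j)) * a i') := by
          exact Finset.sum_congr rfl fun j _ => (Complex.mul_conj _).symm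
      _ = ∑ j, ∑ i, ∑ i', ((starRingEnd ℂ) (ψ (i, j)) * a i) *
            (ψ (i', j) * (starRingEnd ℂ) (a i')) := by
          refine Finset.sum_congr rfl fun j _ => ?_
          rw [map_sum, Finset.sum_mul]
          refine Finset.sum_congr rfl fun i _ => ?_
          rw [Finset.mul_sum]
          refine Finset.sum_congr rfl fun i' _ => ?_
          simp only [_root_.map_mul, RingHomCompTriple.comp_apply, Complex.conj_conj,
            RingHomInvPair.comp_apply_eq, RingHom.id_apply]
      _ = ∑ i, ∑ i', (a i * (starRingEnd ℂ) (a i')) *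
            (∑ j, (starRingEnd ℂ) (ψ (i, j)) * ψ (i', j)) := by
          rw [Finset.sum_comm]
          refine Finset.sum_congr rfl fun i _ => ?_
          rw [Finset.sum_comm]
          refine Finset.sum_congr rfl fun i' _ => ?_
          rw [Finset.mul_sum]
          refine Finset.sum_congr rfl fun j _ => ?_
          ring
      _ = ∑ i, (a i * (starRingEnd ℂ) (a i)) * ((d₁ : ℂ))⁻¹ := by
          refine Finset.sum_congr rfl fun i _ => ?_
          rw [Finset.sum_eq_single i]
          · rw [key i i]
            simp [Matrix.one_apply]
          · intro i' _ hne
            rw [key i i']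
            simp [Matrix.one_apply, Ne.symm hne]
          · simp
      _ = ((d₁ : ℂ))⁻¹ * ∑ i, (Complex.normSq (a i) : ℂ) := by
          rw [← Finset.sum_mul, mul_comm]
          congr 1
          refine Finset.sum_congr rfl fun i _ => ?_
          simp [Complex.mul_conj]
      _ = _ := by norm_num
  exact_mod_cast hc

/-- trace of POVM completeness -/
lemma aux_trace {ι : Type*} [Fintype ι] [DecidableEq ι] {A : ℕ}
    (m : Fin A → ℝ) (u : Fin A → (ι → ℂ))
    (h : ∑ a, (m a : ℂ) • Matrix.vecMulVec (u a) (star (u a)) = 1) :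
    ∑ a, m a * ∑ y, Complex.normSq (u a y) = (Fintype.card ι : ℝ) := by
  have ht := congrArg Matrix.trace h
  rw [Matrix.trace_sum, Matrix.trace_one] at ht
  have h2 : ∀ a : Fin A, Matrix.trace ((m a : ℂ) • Matrix.vecMulVec (u a) (star (u a)))
      = ((m a * ∑ y, Complex.normSq (u a y) : ℝ) : ℂ) := by
    intro a
    rw [Matrix.trace_smul]
    have : Matrix.trace (Matrix.vecMulVec (u a) (star (u a)))
        = ((∑ y, Complex.normSq (u a y) : ℝ) : ℂ) := by
      rw [Matrix.trace]
      push_cast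
      refine Finset.sum_congr rfl fun y _ => ?_
      simp [Matrix.vecMulVec_apply, Matrix.diag, Complex.mul_conj]
    rw [this]
    push_cast
    simp
  simp only [h2] at ht
  rw [← Complex.ofReal_sum] at ht
  exact_mod_cast ht

/-- Rayleigh quotient computation -/
lemma aux_rayleigh {ι : Type*} [Fintype ι] {N : ℕ}
    (ψ : Fin N → (ι → ℂ)) (p : Fin N → ℝ) (φ : ι → ℂ) :
    (star φ ⬝ᵥ ((∑ i, ((p i : ℝ) : ℂ) •
        Matrix.vecMulVec (ψ i) (star (ψ i))).mulVec φ)).re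
      = ∑ i, p i * Complex.normSq (star (ψ i) ⬝ᵥ φ) := by
  have : star φ ⬝ᵥ ((∑ i, ((p i : ℝ) : ℂ) •
        Matrix.vecMulVec (ψ i) (star (ψ i))).mulVec φ)
      = ∑ i, ((p i : ℝ) : ℂ) * ((Complex.normSq (star (ψ i) ⬝ᵥ φ) : ℝ) : ℂ) := by
    have hsm : (∑ i, ((p i : ℝ) : ℂ) • Matrix.vecMulVec (ψ i) (star (ψ i))).mulVec φ
        = ∑ i, (((p i : ℝ) : ℂ) • Matrix.vecMulVec (ψ i) (star (ψ i))).mulVec φ := by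
      funext y
      simp only [Matrix.mulVec, dotProduct, Matrix.sum_apply, Finset.sum_apply,
        Finset.sum_mul]
      rw [Finset.sum_comm]
    rw [hsm]
    have hds : star φ ⬝ᵥ (∑ i, (((p i : ℝ) : ℂ) • Matrix.vecMulVec (ψ i) (star (ψ i))).mulVec φ)
        = ∑ i, star φ ⬝ᵥ (((p i : ℝ) : ℂ) • Matrix.vecMulVec (ψ i) (star (ψ i))).mulVec φ := by
      simp only [dotProduct, Finset.sum_apply, Finset.mul_sum]
      rw [Finset.sum_comm]
    rw [hds]
    refine Finset.sum_congr rfl fun i _ => ?_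
    rw [Matrix.smul_mulVec, dotProduct_smul]
    congr 1
    have hmv : (Matrix.vecMulVec (ψ i) (star (ψ i))).mulVec φ
        = (star (ψ i) ⬝ᵥ φ) • (ψ i) := by
      funext y
      simp only [Matrix.mulVec, dotProduct, Matrix.vecMulVec_apply, Pi.smul_apply,
        smul_eq_mul, Finset.sum_mul]
      exact Finset.sum_congr rfl fun x _ => by ring
    rw [hmv, dotProduct_smul]
    have hconj : star φ ⬝ᵥ ψ i = (starRingEnd ℂ) (star (ψ i) ⬝ᵥ φ) := by
      simp [dotProduct, map_sum, _root_.map_mul, Pi.star_apply, mul_comm]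
    rw [hconj, smul_eq_mul]
    exact Complex.mul_conj _
  rw [this]
  simp only [← Complex.ofReal_mul, ← Complex.ofReal_sum, Complex.ofReal_re]

/-- norm of product vector -/
lemma aux_prodnorm {d₁ d₂ : ℕ} (a : Fin d₁ → ℂ) (b : Fin d₂ → ℂ) :
    ∑ y : Fin d₁ × Fin d₂, Complex.normSq (prodv a b y)
      = (∑ i, Complex.normSq (a i)) * (∑ j, Complex.normSq (b j)) := by
  rw [Fintype.sum_prod_type, Finset.sum_mul_sum]
  exact Finset.sum_congr rfl fun i _ => Finset.sum_congr rfl fun j _ => by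
    simp [prodv, Complex.normSq_mul]

/-- Corollary 3: for an ensemble of maximally entangled states in `ℂ^{d₁} ⊗ ℂ^{d₂}`
(`d₁ ≤ d₂`, each with reduced density matrix `I/d₁`), the separable fidelity satisfies
`F_S ≤ d₂ ‖ρ‖_∞`, where `ρ = ∑ᵢ pᵢ |Ψᵢ⟩⟨Ψᵢ|` and `‖ρ‖_∞` is its largest eigenvalue
(maximal Rayleigh quotient). -/
theorem stmt8 (d₁ d₂ N : ℕ) (hd₁ : 0 < d₁) (hd : d₁ ≤ d₂)
    (ψ : Fin N → (Fin d₁ × Fin d₂ → ℂ)) (hψ : ∀ i, star (ψ i) ⬝ᵥ ψ i = 1)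
    (hmax : ∀ i, red₁ (ψ i) = ((d₁ : ℂ))⁻¹ • 1)
    (p : Fin N → ℝ) (hp : ∀ i, 0 ≤ p i) (hpsum : ∑ i, p i = 1)
    (ρnorm : ℝ)
    (hρ : IsGreatest {x : ℝ | ∃ v : Fin d₁ × Fin d₂ → ℂ, star v ⬝ᵥ v = 1 ∧
        x = (star v ⬝ᵥ ((∑ i, ((p i : ℝ) : ℂ) •
          Matrix.vecMulVec (ψ i) (star (ψ i))).mulVec v)).re} ρnorm) :
    sSup (sepFidSet N p ψ) ≤ (d₂ : ℝ) * ρnorm := by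
  have hρ0 : 0 ≤ ρnorm := by
    obtain ⟨v, hv, hx⟩ := hρ.1
    rw [aux_rayleigh] at hx
    rw [hx]
    exact Finset.sum_nonneg fun i _ => mul_nonneg (hp i) (Complex.normSq_nonneg _)
  refine Real.sSup_le ?_ (mul_nonneg (Nat.cast_nonneg d₂) hρ0)
  rintro x ⟨A, m, χ₁, χ₂, φ, hm, hφ, hpovm, rfl⟩
  set u : Fin A → (Fin d₁ × Fin d₂ → ℂ) := fun a => prodv (χ₁ a) (χ₂ a) with hu
  -- trace of the POVM condition
  have htr : ∑ a, m a * ∑ y, Complex.normSq (u a y) = (d₁ : ℝ) * d₂ := by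
    have := aux_trace m u hpovm
    rwa [Fintype.card_prod, Fintype.card_fin, Fintype.card_fin, Nat.cast_mul] at this
  -- per-state Schmidt bound
  have h1 : ∀ (i : Fin N) (a : Fin A),
      (‖star (ψ i) ⬝ᵥ u a‖)^2 ≤ (d₁ : ℝ)⁻¹ * ∑ y, Complex.normSq (u a y) := by
    intro i a
    have hre : star (ψ i) ⬝ᵥ u a
        = ∑ j, (∑ k, (starRingEnd ℂ) (ψ i (k, j)) * χ₁ a k) * χ₂ a j := by
      rw [dotProduct, Fintype.sum_prod_type, Finset.sum_comm]
      refine Finset.sum_congr rfl fun j _ => ?_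
      rw [Finset.sum_mul]
      refine Finset.sum_congr rfl fun k _ => ?_
      simp only [hu, prodv, Pi.star_apply]
      rw [show star (ψ i (k, j)) = (starRingEnd ℂ) (ψ i (k, j)) from rfl]
      ring
    calc (‖star (ψ i) ⬝ᵥ u a‖)^2
        ≤ (∑ j, Complex.normSq (∑ k, (starRingEnd ℂ) (ψ i (k, j)) * χ₁ a k)) *
            (∑ j, Complex.normSq (χ₂ a j)) := by
          rw [hre]; exact aux_cs _ _
      _ = ((d₁ : ℝ)⁻¹ * ∑ k, Complex.normSq (χ₁ a k)) * (∑ j, Complex.normSq (χ₂ a j)) := by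
          rw [aux_red (ψ i) (hmax i) (χ₁ a)]
      _ = (d₁ : ℝ)⁻¹ * ∑ y, Complex.normSq (u a y) := by
          rw [hu]; rw [aux_prodnorm]; ring
  -- Rayleigh bound
  have h2 : ∀ a : Fin A, ∑ i, p i * Complex.normSq (star (ψ i) ⬝ᵥ φ a) ≤ ρnorm :=
    fun a => hρ.2 ⟨φ a, hφ a, (aux_rayleigh ψ p (φ a)).symm⟩
  have hnsq : ∀ a, (0:ℝ) ≤ ∑ y, Complex.normSq (u a y) := fun a =>
    Finset.sum_nonneg fun _ _ => Complex.normSq_nonneg _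
  have hd₁' : (0:ℝ) < (d₁ : ℝ) := by exact_mod_cast hd₁
  calc ∑ a, ∑ i, p i * m a * (‖star (ψ i) ⬝ᵥ u a‖)^2 *
          (‖star (ψ i) ⬝ᵥ φ a‖)^2
      ≤ ∑ a, (m a * ((d₁ : ℝ)⁻¹ * ∑ y, Complex.normSq (u a y))) * ρnorm := by
        refine Finset.sum_le_sum fun a _ => ?_
        calc ∑ i, p i * m a * (‖star (ψ i) ⬝ᵥ u a‖)^2 *
                (‖star (ψ i) ⬝ᵥ φ a‖)^2
            ≤ ∑ i, (m a * ((d₁ : ℝ)⁻¹ * ∑ y, Complex.normSq (u a y))) *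
                (p i * Complex.normSq (star (ψ i) ⬝ᵥ φ a)) := by
              refine Finset.sum_le_sum fun i _ => ?_
              rw [← Complex.sq_norm (star (ψ i) ⬝ᵥ φ a)]
              nlinarith [h1 i a, hp i, (hm a).le, sq_nonneg (‖star (ψ i) ⬝ᵥ φ a‖),
                sq_nonneg (‖star (ψ i) ⬝ᵥ u a‖),
                mul_le_mul_of_nonneg_right (mul_le_mul_of_nonneg_left (h1 i a)
                  (mul_nonneg (hp i) (hm a).le)) (sq_nonneg (‖star (ψ i) ⬝ᵥ φ a‖))]
          _ = (m a * ((d₁ : ℝ)⁻¹ * ∑ y, Complex.normSq (u a y))) *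
                ∑ i, p i * Complex.normSq (star (ψ i) ⬝ᵥ φ a) :=
              (Finset.mul_sum _ _ _).symm
          _ ≤ (m a * ((d₁ : ℝ)⁻¹ * ∑ y, Complex.normSq (u a y))) * ρnorm := by
              refine mul_le_mul_of_nonneg_left (h2 a) ?_
              exact mul_nonneg (hm a).le (mul_nonneg (inv_nonneg.2 hd₁'.le) (hnsq a))
    _ = ((d₁ : ℝ)⁻¹ * ρnorm) * ∑ a, m a * ∑ y, Complex.normSq (u a y) := by
        rw [Finset.mul_sum]
        exact Finset.sum_congr rfl fun a _ => by ring
    _ = ((d₁ : ℝ)⁻¹ * ρnorm) * ((d₁ : ℝ) * d₂) := by rw [htr]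
    _ = (d₂ : ℝ) * ρnorm := by field_simp
end
end

section
/- For the four Bell states in ℂ²⊗ℂ² with probabilities p₁ ≥ p₂ ≥ p₃ ≥ p₄, the separable fidelity (and separable success probability) equals p₁ + p₂. -/
open Matrix
open scoped BigOperators ComplexOrder

noncomputable section

/-- Separable success-probability set; its supremum is `P_s(S)`. -/
def sepPsSet {d₁ d₂ : ℕ} (N : ℕ) (p : Fin N → ℝ)
    (ψ : Fin N → (Fin d₁ × Fin d₂ → ℂ)) : Set ℝ :=
  {x : ℝ | ∃ (A : ℕ) (m : Fin A → ℝ) (χ₁ : Fin A → Fin d₁ → ℂ)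
      (χ₂ : Fin A → Fin d₂ → ℂ) (G : Fin A → Fin N),
    (∀ a, 0 < m a) ∧
    (∑ a, (m a : ℂ) • Matrix.vecMulVec (prodv (χ₁ a) (χ₂ a))
        (star (prodv (χ₁ a) (χ₂ a))) = 1) ∧
    x = ∑ a, p (G a) * m a *
          ‖star (ψ (G a)) ⬝ᵥ prodv (χ₁ a) (χ₂ a)‖^2}

/-- The four Bell states in `ℂ² ⊗ ℂ²`. -/
def Bell : Fin 4 → (Fin 2 × Fin 2 → ℂ) :=
  ![fun y => if y.1 = y.2 then ((Real.sqrt 2)⁻¹ : ℂ) else 0,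
    fun y => if y.1 = 0 ∧ y.2 = 0 then ((Real.sqrt 2)⁻¹ : ℂ)
             else if y.1 = 1 ∧ y.2 = 1 then -((Real.sqrt 2)⁻¹ : ℂ) else 0,
    fun y => if y.1 ≠ y.2 then ((Real.sqrt 2)⁻¹ : ℂ) else 0,
    fun y => if y.1 = 0 ∧ y.2 = 1 then ((Real.sqrt 2)⁻¹ : ℂ)
             else if y.1 = 1 ∧ y.2 = 0 then -((Real.sqrt 2)⁻¹ : ℂ) else 0]


-- ======================= auxiliary development =======================

def nrm {n : Type*} [Fintype n] (v : n → ℂ) : ℝ := ∑ i, (‖v i‖)^2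

lemma star_dot_self {n : Type*} [Fintype n] (v : n → ℂ) :
    star v ⬝ᵥ v = ((nrm v : ℝ) : ℂ) := by
  simp only [dotProduct, Pi.star_apply, Complex.star_def, nrm, Complex.sq_norm]
  push_cast
  exact Finset.sum_congr rfl fun i _ => (Complex.normSq_eq_conj_mul_self (z := v i)).symm

lemma cs {n : Type*} [Fintype n] (u v : n → ℂ) :
    (‖star u ⬝ᵥ v‖)^2 ≤ nrm u * nrm v := by
  have h := norm_inner_le_norm (𝕜 := ℂ) ((WithLp.equiv 2 (n → ℂ)).symm u)
    ((WithLp.equiv 2 (n → ℂ)).symm v)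
  rw [show inner ℂ ((WithLp.equiv 2 (n → ℂ)).symm u) ((WithLp.equiv 2 (n → ℂ)).symm v) = star u ⬝ᵥ v from by rw [dotProduct_comm]; rfl] at h
  have hu : ‖(WithLp.equiv 2 (n → ℂ)).symm u‖^2 = nrm u := by
    rw [EuclideanSpace.norm_eq, Real.sq_sqrt (by positivity)]
    simp [nrm]
  have hv : ‖(WithLp.equiv 2 (n → ℂ)).symm v‖^2 = nrm v := by
    rw [EuclideanSpace.norm_eq, Real.sq_sqrt (by positivity)]
    simp [nrm]
  calc (‖star u ⬝ᵥ v‖)^2 = ‖star u ⬝ᵥ v‖^2 := rfl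
    _ ≤ (‖(WithLp.equiv 2 (n → ℂ)).symm u‖ * ‖(WithLp.equiv 2 (n → ℂ)).symm v‖)^2 := by
        apply pow_le_pow_left₀ (norm_nonneg _) h 2
    _ = nrm u * nrm v := by rw [mul_pow, hu, hv]

lemma sum_mulVec' {n A : Type*} [Fintype n] [Fintype A] (M : A → Matrix n n ℂ) (v : n → ℂ) :
    (∑ a, M a) *ᵥ v = ∑ a, (M a *ᵥ v) := by
  funext x
  simp [Matrix.mulVec, dotProduct, Matrix.sum_apply, Finset.sum_mul]
  rw [Finset.sum_comm]

lemma vecMulVec_mulVec' {n : Type*} [Fintype n] (u v w : n → ℂ) :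
    Matrix.vecMulVec u v *ᵥ w = (v ⬝ᵥ w) • u := by
  funext x
  simp [Matrix.mulVec, Matrix.vecMulVec_apply, dotProduct, Finset.mul_sum,
    Finset.sum_mul]
  exact Finset.sum_congr rfl (fun i _ => by ring)

lemma dot_sum {n A : Type*} [Fintype n] [Fintype A] (v : n → ℂ) (f : A → n → ℂ) :
    v ⬝ᵥ (∑ a, f a) = ∑ a, v ⬝ᵥ f a := by
  simp [dotProduct, Finset.sum_apply, Finset.mul_sum]
  rw [Finset.sum_comm]

lemma resolution {n A : Type*} [Fintype n] [Fintype A] [DecidableEq n]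
    (m : A → ℝ) (u : A → n → ℂ)
    (h : ∑ a, (m a : ℂ) • Matrix.vecMulVec (u a) (star (u a)) = 1) (ψ : n → ℂ) :
    ∑ a, m a * (‖star ψ ⬝ᵥ u a‖)^2 = nrm ψ := by
  have key := congrArg (fun M : Matrix n n ℂ => star ψ ⬝ᵥ (M *ᵥ ψ)) h
  simp only [Matrix.one_mulVec, sum_mulVec', Matrix.smul_mulVec,
    vecMulVec_mulVec', dot_sum, star_dot_self] at key
  have : ∀ a, star ψ ⬝ᵥ ((m a : ℂ) • (star (u a) ⬝ᵥ ψ) • u a)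
      = ((m a * (‖star ψ ⬝ᵥ u a‖)^2 : ℝ) : ℂ) := by
    intro a
    have h1 : star (u a) ⬝ᵥ ψ = starRingEnd ℂ (star ψ ⬝ᵥ u a) := by
      simp [dotProduct, map_sum, mul_comm]
    rw [dotProduct_smul, dotProduct_smul, h1, smul_eq_mul, smul_eq_mul]
    rw [← Complex.normSq_eq_conj_mul_self]
    push_cast
    norm_cast
    rw [Complex.sq_norm]
  rw [Finset.sum_congr rfl (fun a _ => this a)] at key
  rw [← Complex.ofReal_sum] at key
  exact_mod_cast key

lemma trace_constraint {n A : Type*} [Fintype n] [Fintype A] [DecidableEq n]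
    (m : A → ℝ) (u : A → n → ℂ)
    (h : ∑ a, (m a : ℂ) • Matrix.vecMulVec (u a) (star (u a)) = 1) :
    ∑ a, m a * nrm (u a) = Fintype.card n := by
  have key := congrArg Matrix.trace h
  simp only [Matrix.trace_sum, Matrix.trace_smul, Matrix.trace_one] at key
  have : ∀ a, Matrix.trace (Matrix.vecMulVec (u a) (star (u a))) = ((nrm (u a) : ℝ) : ℂ) := by
    intro a
    rw [Matrix.trace, ← star_dot_self (u a)]
    simp [Matrix.diag, Matrix.vecMulVec_apply, dotProduct, mul_comm]
  rw [Finset.sum_congr rfl (fun a _ => by rw [this a, smul_eq_mul])] at key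
  exact_mod_cast key

lemma dot22 (ψ φ : Fin 2 × Fin 2 → ℂ) :
    star ψ ⬝ᵥ φ = (starRingEnd ℂ) (ψ (0,0)) * φ (0,0) + (starRingEnd ℂ) (ψ (0,1)) * φ (0,1)
      + (starRingEnd ℂ) (ψ (1,0)) * φ (1,0) + (starRingEnd ℂ) (ψ (1,1)) * φ (1,1) := by
  simp [dotProduct, Fintype.sum_prod_type, Fin.sum_univ_two, Complex.star_def]
  ring

lemma bell_entries : (Bell 0 (0,0) = ((Real.sqrt 2)⁻¹ : ℂ)) ∧ (Bell 0 (0,1) = 0) := by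
  constructor <;> simp [Bell]

abbrev rc : ℂ := ((Real.sqrt 2)⁻¹ : ℂ)

lemma abs_rc : ‖rc‖ ^ 2 = 1/2 := by
  rw [show rc = ((Real.sqrt 2 : ℝ) : ℂ)⁻¹ from rfl, norm_inv, Complex.norm_real, Real.norm_eq_abs,
    abs_of_nonneg (Real.sqrt_nonneg 2), inv_pow, Real.sq_sqrt (by norm_num)]
  norm_num

lemma conj_rc : (starRingEnd ℂ) rc = rc := by
  rw [show rc = ((Real.sqrt 2 : ℝ) : ℂ)⁻¹ from rfl, map_inv₀, Complex.conj_ofReal]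

lemma bell_dot (φ : Fin 2 × Fin 2 → ℂ) :
    (star (Bell 0) ⬝ᵥ φ = rc * (φ (0,0) + φ (1,1))) ∧
    (star (Bell 1) ⬝ᵥ φ = rc * (φ (0,0) - φ (1,1))) ∧
    (star (Bell 2) ⬝ᵥ φ = rc * (φ (0,1) + φ (1,0))) ∧
    (star (Bell 3) ⬝ᵥ φ = rc * (φ (0,1) - φ (1,0))) := by
  have e : ∀ (i : Fin 4) (y : Fin 2 × Fin 2), Bell i y = Bell i y := fun _ _ => rfl
  refine ⟨?_, ?_, ?_, ?_⟩ <;> rw [dot22] <;>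
    simp only [show Bell 0 (0,0) = rc from rfl, show Bell 0 (0,1) = 0 from rfl,
      show Bell 0 (1,0) = 0 from rfl, show Bell 0 (1,1) = rc from rfl,
      show Bell 1 (0,0) = rc from rfl, show Bell 1 (0,1) = 0 from rfl,
      show Bell 1 (1,0) = 0 from rfl, show Bell 1 (1,1) = -rc from rfl,
      show Bell 2 (0,0) = 0 from rfl, show Bell 2 (0,1) = rc from rfl,
      show Bell 2 (1,0) = rc from rfl, show Bell 2 (1,1) = 0 from rfl,
      show Bell 3 (0,0) = 0 from rfl, show Bell 3 (0,1) = rc from rfl,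
      show Bell 3 (1,0) = -rc from rfl, show Bell 3 (1,1) = 0 from rfl,
      map_neg, map_zero, conj_rc] <;> ring

lemma two_cs (x y z w : ℂ) : (‖x*z + y*w‖)^2
    ≤ (‖x‖^2 + ‖y‖^2) * (‖z‖^2 + ‖w‖^2) := by
  have h1 : ‖x*z + y*w‖ ≤ ‖x‖ * ‖z‖
      + ‖y‖ * ‖w‖ := by
    calc ‖x*z + y*w‖ ≤ ‖x*z‖ + ‖y*w‖ :=
          norm_add_le _ _
      _ = _ := by rw [norm_mul, norm_mul]
  have h2 : (0:ℝ) ≤ ‖x*z + y*w‖ := norm_nonneg _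
  nlinarith [norm_nonneg x, norm_nonneg y, norm_nonneg z,
    norm_nonneg w, sq_nonneg (‖x‖ * ‖w‖ - ‖y‖ * ‖z‖)]

lemma nrm2 {k : ℕ} (v : Fin 2 → ℂ) : nrm v = ‖v 0‖^2 + ‖v 1‖^2 := by
  simp [nrm, Fin.sum_univ_two]

lemma schmidt (i : Fin 4) (a b : Fin 2 → ℂ) :
    (‖star (Bell i) ⬝ᵥ prodv a b‖)^2 ≤ 1/2 * (nrm a * nrm b) := by
  obtain ⟨h0, h1, h2, h3⟩ := bell_dot (prodv a b)
  have hn : nrm a * nrm b = (‖a 0‖^2 + ‖a 1‖^2)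
      * (‖b 0‖^2 + ‖b 1‖^2) := by rw [nrm2 (k:=0), nrm2 (k:=0)]
  fin_cases i
  · show ‖star (Bell 0) ⬝ᵥ prodv a b‖ ^ 2 ≤ _
    rw [h0, norm_mul, mul_pow, abs_rc, hn]
    have : prodv a b (0,0) + prodv a b (1,1) = a 0 * b 0 + a 1 * b 1 := by simp [prodv]
    rw [this]
    nlinarith [two_cs (a 0) (a 1) (b 0) (b 1)]
  · show ‖star (Bell 1) ⬝ᵥ prodv a b‖ ^ 2 ≤ _
    rw [h1, norm_mul, mul_pow, abs_rc, hn]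
    have : prodv a b (0,0) - prodv a b (1,1) = a 0 * b 0 + (-(a 1)) * b 1 := by
      simp [prodv]; ring
    rw [this]
    have h := two_cs (a 0) (-(a 1)) (b 0) (b 1)
    rw [norm_neg] at h
    nlinarith [h]
  · show ‖star (Bell 2) ⬝ᵥ prodv a b‖ ^ 2 ≤ _
    rw [h2, norm_mul, mul_pow, abs_rc, hn]
    have : prodv a b (0,1) + prodv a b (1,0) = a 0 * b 1 + a 1 * b 0 := by simp [prodv]
    rw [this]
    nlinarith [two_cs (a 0) (a 1) (b 1) (b 0)]
  · show ‖star (Bell 3) ⬝ᵥ prodv a b‖ ^ 2 ≤ _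
    rw [h3, norm_mul, mul_pow, abs_rc, hn]
    have : prodv a b (0,1) - prodv a b (1,0) = a 0 * b 1 + (-(a 1)) * b 0 := by
      simp [prodv]; ring
    rw [this]
    have h := two_cs (a 0) (-(a 1)) (b 1) (b 0)
    rw [norm_neg] at h
    nlinarith [h]

lemma parseval (φ : Fin 2 × Fin 2 → ℂ) :
    ∑ i, (‖star (Bell i) ⬝ᵥ φ‖)^2 = nrm φ := by
  obtain ⟨h0, h1, h2, h3⟩ := bell_dot φ
  rw [Fin.sum_univ_four, h0, h1, h2, h3]
  simp only [norm_mul, mul_pow, abs_rc]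
  have key : ∀ x y : ℂ, ‖x + y‖^2 + ‖x - y‖^2
      = 2 * (‖x‖^2 + ‖y‖^2) := by
    intro x y
    simp only [Complex.sq_norm, Complex.normSq_apply, Complex.add_re, Complex.add_im,
      Complex.sub_re, Complex.sub_im]
    ring
  have hnrm : nrm φ = ‖φ (0,0)‖^2 + ‖φ (0,1)‖^2
      + ‖φ (1,0)‖^2 + ‖φ (1,1)‖^2 := by
    simp [nrm, Fintype.sum_prod_type, Fin.sum_univ_two]
    ring
  rw [hnrm]
  nlinarith [key (φ (0,0)) (φ (1,1)), key (φ (0,1)) (φ (1,0))]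

lemma rc_sq : rc * rc = 1/2 := by
  rw [show rc = ((Real.sqrt 2 : ℝ) : ℂ)⁻¹ from rfl, ← mul_inv]
  norm_cast
  rw [Real.mul_self_sqrt (by norm_num)]
  norm_num

lemma bell_ortho_expl :
    (star (Bell 0) ⬝ᵥ Bell 0 = (1 : ℂ)) ∧
    (star (Bell 0) ⬝ᵥ Bell 1 = (0 : ℂ)) ∧
    (star (Bell 0) ⬝ᵥ Bell 2 = (0 : ℂ)) ∧
    (star (Bell 0) ⬝ᵥ Bell 3 = (0 : ℂ)) ∧
    (star (Bell 1) ⬝ᵥ Bell 0 = (0 : ℂ)) ∧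
    (star (Bell 1) ⬝ᵥ Bell 1 = (1 : ℂ)) ∧
    (star (Bell 1) ⬝ᵥ Bell 2 = (0 : ℂ)) ∧
    (star (Bell 1) ⬝ᵥ Bell 3 = (0 : ℂ)) ∧
    (star (Bell 2) ⬝ᵥ Bell 0 = (0 : ℂ)) ∧
    (star (Bell 2) ⬝ᵥ Bell 1 = (0 : ℂ)) ∧
    (star (Bell 2) ⬝ᵥ Bell 2 = (1 : ℂ)) ∧
    (star (Bell 2) ⬝ᵥ Bell 3 = (0 : ℂ)) ∧
    (star (Bell 3) ⬝ᵥ Bell 0 = (0 : ℂ)) ∧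
    (star (Bell 3) ⬝ᵥ Bell 1 = (0 : ℂ)) ∧
    (star (Bell 3) ⬝ᵥ Bell 2 = (0 : ℂ)) ∧
    (star (Bell 3) ⬝ᵥ Bell 3 = (1 : ℂ)) := by
  refine ⟨?_, ?_, ?_, ?_, ?_, ?_, ?_, ?_, ?_, ?_, ?_, ?_, ?_, ?_, ?_, ?_⟩ <;>
    rw [dot22] <;>
    simp only [show Bell 0 (0,0) = rc from rfl, show Bell 0 (0,1) = 0 from rfl,
      show Bell 0 (1,0) = 0 from rfl, show Bell 0 (1,1) = rc from rfl,
      show Bell 1 (0,0) = rc from rfl, show Bell 1 (0,1) = 0 from rfl,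
      show Bell 1 (1,0) = 0 from rfl, show Bell 1 (1,1) = -rc from rfl,
      show Bell 2 (0,0) = 0 from rfl, show Bell 2 (0,1) = rc from rfl,
      show Bell 2 (1,0) = rc from rfl, show Bell 2 (1,1) = 0 from rfl,
      show Bell 3 (0,0) = 0 from rfl, show Bell 3 (0,1) = rc from rfl,
      show Bell 3 (1,0) = -rc from rfl, show Bell 3 (1,1) = 0 from rfl,
      map_neg, map_zero, conj_rc] <;>
    first
      | linear_combination (2:ℂ) * rc_sq
      | ring

lemma bell_ortho (i j : Fin 4) :
    star (Bell i) ⬝ᵥ Bell j = if i = j then 1 else 0 := by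
  have h := bell_ortho_expl
  fin_cases i <;> fin_cases j
  exacts [h.1, h.2.1, h.2.2.1, h.2.2.2.1, h.2.2.2.2.1, h.2.2.2.2.2.1, h.2.2.2.2.2.2.1, h.2.2.2.2.2.2.2.1, h.2.2.2.2.2.2.2.2.1, h.2.2.2.2.2.2.2.2.2.1, h.2.2.2.2.2.2.2.2.2.2.1, h.2.2.2.2.2.2.2.2.2.2.2.1, h.2.2.2.2.2.2.2.2.2.2.2.2.1, h.2.2.2.2.2.2.2.2.2.2.2.2.2.1, h.2.2.2.2.2.2.2.2.2.2.2.2.2.2.1, h.2.2.2.2.2.2.2.2.2.2.2.2.2.2.2]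

lemma nrm_prodv (a b : Fin 2 → ℂ) : nrm (prodv a b) = nrm a * nrm b := by
  simp only [nrm, prodv, Fintype.sum_prod_type, norm_mul, mul_pow]
  rw [Finset.sum_mul_sum]

lemma abs_bell_ortho (i j : Fin 4) :
    (‖star (Bell i) ⬝ᵥ Bell j‖)^2 = if i = j then 1 else 0 := by
  rw [bell_ortho]
  by_cases h : i = j <;> simp [h]

lemma nrm_bell (i : Fin 4) : nrm (Bell i) = 1 := by
  have h := parseval (Bell i)
  simp only [abs_bell_ortho, Finset.sum_ite_eq, Finset.sum_ite_eq',
    Finset.mem_univ, if_true] at h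
  linarith


section Main

lemma comb (p q : Fin 4 → ℝ) (hp1 : 0 ≤ p 1) (h01 : p 1 ≤ p 0) (h12 : p 2 ≤ p 1)
    (h13 : p 3 ≤ p 1)
    (hq0 : ∀ i, 0 ≤ q i) (hq1 : ∀ i, q i ≤ 1) (hqs : ∑ i, q i ≤ 2) :
    ∑ i, p i * q i ≤ p 0 + p 1 := by
  rw [Fin.sum_univ_four] at hqs ⊢
  nlinarith [mul_nonneg (sub_nonneg.2 h12) (hq0 2), mul_nonneg (sub_nonneg.2 h13) (hq0 3),
    mul_nonneg (sub_nonneg.2 h01) (sub_nonneg.2 (hq1 0)),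
    mul_nonneg hp1 (by linarith : (0:ℝ) ≤ 2 - (q 0 + q 1 + q 2 + q 3))]

lemma card4 : (Fintype.card (Fin 2 × Fin 2) : ℝ) = 4 := by simp

lemma ub_fid (p : Fin 4 → ℝ) (hp1 : 0 ≤ p 1) (h01 : p 1 ≤ p 0) (h12 : p 2 ≤ p 1) (h13 : p 3 ≤ p 1)
    (x : ℝ) (hx : x ∈ sepFidSet 4 p Bell) : x ≤ p 0 + p 1 := by
  obtain ⟨A, m, χ₁, χ₂, φ, hm, hφ, hsum, hxeq⟩ := hx
  set u : Fin A → Fin 2 × Fin 2 → ℂ := fun a => prodv (χ₁ a) (χ₂ a) with hu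
  have res := resolution m u hsum
  have tr : ∑ a, m a * nrm (u a) = 4 := by
    have h := trace_constraint m u hsum
    rwa [card4] at h
  have nφ : ∀ a, nrm (φ a) = 1 := by
    intro a
    have h := hφ a
    rw [star_dot_self] at h
    exact_mod_cast h
  have absφ_le : ∀ (i : Fin 4) a, (‖star (Bell i) ⬝ᵥ φ a‖)^2 ≤ 1 := by
    intro i a
    calc (‖star (Bell i) ⬝ᵥ φ a‖)^2 ≤ nrm (Bell i) * nrm (φ a) := cs _ _
      _ = 1 := by rw [nrm_bell, nφ, one_mul]
  set q : Fin 4 → ℝ := fun i => ∑ a, m a * (‖star (Bell i) ⬝ᵥ u a‖)^2 *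
      (‖star (Bell i) ⬝ᵥ φ a‖)^2 with hq
  have hq0 : ∀ i, 0 ≤ q i := by
    intro i
    apply Finset.sum_nonneg
    intro a _
    have := (hm a).le
    positivity
  have hq1 : ∀ i, q i ≤ 1 := by
    intro i
    have step : q i ≤ ∑ a, m a * (‖star (Bell i) ⬝ᵥ u a‖)^2 := by
      apply Finset.sum_le_sum
      intro a _
      have hnn : 0 ≤ m a * (‖star (Bell i) ⬝ᵥ u a‖)^2 := by
        have := (hm a).le; positivity
      exact mul_le_of_le_one_right hnn (absφ_le i a)
    rw [res (Bell i), nrm_bell] at step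
    exact step
  have hqs : ∑ i, q i ≤ 2 := by
    have swap : ∑ i, q i = ∑ a, ∑ i : Fin 4, m a * (‖star (Bell i) ⬝ᵥ u a‖)^2 *
        (‖star (Bell i) ⬝ᵥ φ a‖)^2 := Finset.sum_comm
    rw [swap]
    have per_a : ∀ a, ∑ i : Fin 4, m a * (‖star (Bell i) ⬝ᵥ u a‖)^2 *
        (‖star (Bell i) ⬝ᵥ φ a‖)^2 ≤ m a * (1/2 * nrm (u a)) := by
      intro a
      have hb : ∀ i : Fin 4, m a * (‖star (Bell i) ⬝ᵥ u a‖)^2 *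
          (‖star (Bell i) ⬝ᵥ φ a‖)^2 ≤
          m a * (1/2 * nrm (u a)) * (‖star (Bell i) ⬝ᵥ φ a‖)^2 := by
        intro i
        apply mul_le_mul_of_nonneg_right _ (by positivity)
        apply mul_le_mul_of_nonneg_left _ (hm a).le
        rw [hu, nrm_prodv]
        exact schmidt i _ _
      calc ∑ i : Fin 4, m a * (‖star (Bell i) ⬝ᵥ u a‖)^2 *
            (‖star (Bell i) ⬝ᵥ φ a‖)^2
          ≤ ∑ i : Fin 4, m a * (1/2 * nrm (u a)) * (‖star (Bell i) ⬝ᵥ φ a‖)^2 :=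
            Finset.sum_le_sum (fun i _ => hb i)
        _ = m a * (1/2 * nrm (u a)) * ∑ i : Fin 4, (‖star (Bell i) ⬝ᵥ φ a‖)^2 := by
            rw [Finset.mul_sum]
        _ = m a * (1/2 * nrm (u a)) := by rw [parseval, nφ, mul_one]
    calc ∑ a, ∑ i : Fin 4, m a * (‖star (Bell i) ⬝ᵥ u a‖)^2 *
          (‖star (Bell i) ⬝ᵥ φ a‖)^2
        ≤ ∑ a, m a * (1/2 * nrm (u a)) := Finset.sum_le_sum (fun a _ => per_a a)
      _ = 1/2 * ∑ a, m a * nrm (u a) := by rw [Finset.mul_sum]; congr 1; funext a; ring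
      _ = 2 := by rw [tr]; norm_num
  have hxpq : x = ∑ i, p i * q i := by
    rw [hxeq, Finset.sum_comm]
    apply Finset.sum_congr rfl
    intro i _
    rw [hq, Finset.mul_sum]
    apply Finset.sum_congr rfl
    intro a _
    ring
  rw [hxpq]
  exact comb p q hp1 h01 h12 h13 hq0 hq1 hqs

lemma ub_ps (p : Fin 4 → ℝ) (hp1 : 0 ≤ p 1) (h01 : p 1 ≤ p 0) (h12 : p 2 ≤ p 1)
    (h13 : p 3 ≤ p 1)
    (x : ℝ) (hx : x ∈ sepPsSet 4 p Bell) : x ≤ p 0 + p 1 := by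
  obtain ⟨A, m, χ₁, χ₂, G, hm, hsum, hxeq⟩ := hx
  set u : Fin A → Fin 2 × Fin 2 → ℂ := fun a => prodv (χ₁ a) (χ₂ a) with hu
  have res := resolution m u hsum
  have tr : ∑ a, m a * nrm (u a) = 4 := by
    have h := trace_constraint m u hsum
    rwa [card4] at h
  set q : Fin 4 → ℝ := fun i => ∑ a ∈ Finset.univ.filter (fun a => G a = i),
      m a * (‖star (Bell i) ⬝ᵥ u a‖)^2 with hq
  have hq0 : ∀ i, 0 ≤ q i := by
    intro i
    apply Finset.sum_nonneg
    intro a _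
    have := (hm a).le
    positivity
  have hq1 : ∀ i, q i ≤ 1 := by
    intro i
    have step : q i ≤ ∑ a, m a * (‖star (Bell i) ⬝ᵥ u a‖)^2 := by
      apply Finset.sum_le_sum_of_subset_of_nonneg (Finset.filter_subset _ _)
      intro a _ _
      have := (hm a).le
      positivity
    rw [res (Bell i), nrm_bell] at step
    exact step
  have hfib : ∀ (f : Fin A → ℝ), ∑ i : Fin 4, ∑ a ∈ Finset.univ.filter (fun a => G a = i), f a
      = ∑ a, f a := by
    intro f
    exact Finset.sum_fiberwise _ _ _
  have hqs : ∑ i, q i ≤ 2 := by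
    have e1 : ∑ i, q i = ∑ a, m a * (‖star (Bell (G a)) ⬝ᵥ u a‖)^2 := by
      rw [hq]
      rw [← hfib (fun a => m a * (‖star (Bell (G a)) ⬝ᵥ u a‖)^2)]
      apply Finset.sum_congr rfl
      intro i _
      apply Finset.sum_congr rfl
      intro a ha
      rw [Finset.mem_filter] at ha
      rw [ha.2]
    rw [e1]
    calc ∑ a, m a * (‖star (Bell (G a)) ⬝ᵥ u a‖)^2
        ≤ ∑ a, m a * (1/2 * nrm (u a)) := by
          apply Finset.sum_le_sum
          intro a _
          apply mul_le_mul_of_nonneg_left _ (hm a).le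
          rw [hu, nrm_prodv]
          exact schmidt (G a) _ _
      _ = 1/2 * ∑ a, m a * nrm (u a) := by rw [Finset.mul_sum]; congr 1; funext a; ring
      _ = 2 := by rw [tr]; norm_num
  have hxpq : x = ∑ i, p i * q i := by
    rw [hxeq]
    rw [← hfib (fun a => p (G a) * m a * (‖star (Bell (G a)) ⬝ᵥ u a‖)^2)]
    apply Finset.sum_congr rfl
    intro i _
    rw [hq, Finset.mul_sum]
    apply Finset.sum_congr rfl
    intro a ha
    rw [Finset.mem_filter] at ha
    rw [ha.2]
    ring
  rw [hxpq]
  exact comb p q hp1 h01 h12 h13 hq0 hq1 hqs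

end Main

section Lower

def pv : Fin 2 → ℂ := fun _ => rc
def mv : Fin 2 → ℂ := ![rc, -rc]
def C1 : Fin 4 → Fin 2 → ℂ := ![pv, pv, mv, mv]
def C2 : Fin 4 → Fin 2 → ℂ := ![pv, mv, pv, mv]
def Gd : Fin 4 → Fin 4 := ![0, 1, 1, 0]

lemma two_povm (y z : Fin 2) :
    pv y * (starRingEnd ℂ) (pv z) + mv y * (starRingEnd ℂ) (mv z)
      = if y = z then 1 else 0 := by
  fin_cases y <;> fin_cases z <;>
    simp only [Fin.mk_zero, Fin.mk_one, Fin.isValue, pv, show mv 0 = rc from rfl,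
      show mv 1 = -rc from rfl, map_neg, conj_rc] <;>
    norm_num <;>
    first
      | linear_combination (2:ℂ) * rc_sq
      | ring

lemma povm : ∑ a : Fin 4, ((1:ℝ) : ℂ) • Matrix.vecMulVec (prodv (C1 a) (C2 a))
    (star (prodv (C1 a) (C2 a))) = 1 := by
  ext ⟨y1, y2⟩ ⟨z1, z2⟩
  simp only [Matrix.sum_apply, Matrix.smul_apply, Matrix.vecMulVec_apply, Fin.sum_univ_four,
    Pi.star_apply, Complex.star_def, prodv, smul_eq_mul, Complex.ofReal_one, one_mul,
    show C1 0 = pv from rfl, show C1 1 = pv from rfl, show C1 2 = mv from rfl,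
    show C1 3 = mv from rfl, show C2 0 = pv from rfl, show C2 1 = mv from rfl,
    show C2 2 = pv from rfl, show C2 3 = mv from rfl, _root_.map_mul]
  rw [Matrix.one_apply]
  have t1 := two_povm y1 z1
  have t2 := two_povm y2 z2
  by_cases h1 : y1 = z1 <;> by_cases h2 : y2 = z2
  · rw [if_pos h1] at t1
    rw [if_pos h2] at t2
    rw [if_pos (by simp [Prod.ext_iff, h1, h2])]
    linear_combination (pv y2 * (starRingEnd ℂ) (pv z2) + mv y2 * (starRingEnd ℂ) (mv z2)) * t1 + t2
  · rw [if_pos h1] at t1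
    rw [if_neg h2] at t2
    rw [if_neg (by simp [Prod.ext_iff, h2])]
    linear_combination (pv y2 * (starRingEnd ℂ) (pv z2) + mv y2 * (starRingEnd ℂ) (mv z2)) * t1 + t2
  · rw [if_neg h1] at t1
    rw [if_neg (by simp [Prod.ext_iff, h1])]
    linear_combination (pv y2 * (starRingEnd ℂ) (pv z2) + mv y2 * (starRingEnd ℂ) (mv z2)) * t1
  · rw [if_neg h1] at t1
    rw [if_neg (by simp [Prod.ext_iff, h1])]
    linear_combination (pv y2 * (starRingEnd ℂ) (pv z2) + mv y2 * (starRingEnd ℂ) (mv z2)) * t1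

lemma chi_dot (a : Fin 4) :
    star (Bell (Gd a)) ⬝ᵥ prodv (C1 a) (C2 a) = rc := by
  fin_cases a
  · show star (Bell (Gd 0)) ⬝ᵥ prodv (C1 0) (C2 0) = rc
    rw [show Gd 0 = 0 from rfl, (bell_dot _).1]
    simp only [prodv, show C1 0 = pv from rfl, show C2 0 = pv from rfl, pv]
    linear_combination 2 * rc * rc_sq
  · show star (Bell (Gd 1)) ⬝ᵥ prodv (C1 1) (C2 1) = rc
    rw [show Gd 1 = 1 from rfl, (bell_dot _).2.1]
    simp only [prodv, show C1 1 = pv from rfl, show C2 1 = mv from rfl, pv,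
      show mv 0 = rc from rfl, show mv 1 = -rc from rfl]
    linear_combination 2 * rc * rc_sq
  · show star (Bell (Gd 2)) ⬝ᵥ prodv (C1 2) (C2 2) = rc
    rw [show Gd 2 = 1 from rfl, (bell_dot _).2.1]
    simp only [prodv, show C1 2 = mv from rfl, show C2 2 = pv from rfl, pv,
      show mv 0 = rc from rfl, show mv 1 = -rc from rfl]
    linear_combination 2 * rc * rc_sq
  · show star (Bell (Gd 3)) ⬝ᵥ prodv (C1 3) (C2 3) = rc
    rw [show Gd 3 = 0 from rfl, (bell_dot _).1]
    simp only [prodv, show C1 3 = mv from rfl, show C2 3 = mv from rfl,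
      show mv 0 = rc from rfl, show mv 1 = -rc from rfl]
    linear_combination 2 * rc * rc_sq

lemma abs_chi (a : Fin 4) :
    (‖star (Bell (Gd a)) ⬝ᵥ prodv (C1 a) (C2 a)‖)^2 = 1/2 := by
  rw [chi_dot, abs_rc]

end Lower

lemma mem_fid (p : Fin 4 → ℝ) : (p 0 + p 1) ∈ sepFidSet 4 p Bell := by
  refine ⟨4, fun _ => 1, C1, C2, fun a => Bell (Gd a), fun _ => one_pos, ?_, povm, ?_⟩
  · intro a
    rw [bell_ortho]
    simp
  · simp only [abs_bell_ortho, mul_ite, mul_one, mul_zero, Finset.sum_ite_eq',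
      Finset.mem_univ, if_true]
    simp only [abs_chi]
    rw [Fin.sum_univ_four]
    simp only [show Gd 0 = 0 from rfl, show Gd 1 = 1 from rfl, show Gd 2 = 1 from rfl,
      show Gd 3 = 0 from rfl]
    ring

lemma mem_ps (p : Fin 4 → ℝ) : (p 0 + p 1) ∈ sepPsSet 4 p Bell := by
  refine ⟨4, fun _ => 1, C1, C2, Gd, fun _ => one_pos, povm, ?_⟩
  simp only [abs_chi]
  rw [Fin.sum_univ_four]
  simp only [show Gd 0 = 0 from rfl, show Gd 1 = 1 from rfl, show Gd 2 = 1 from rfl,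
    show Gd 3 = 0 from rfl]
  ring

/-- Example 1: for the four Bell states with probabilities `p₁ ≥ p₂ ≥ p₃ ≥ p₄`, the
separable fidelity and the separable success probability both equal `p₁ + p₂`. -/
theorem stmt12 (p : Fin 4 → ℝ) (hp : ∀ i, 0 ≤ p i) (hpsum : ∑ i, p i = 1)
    (hord : ∀ i j : Fin 4, i ≤ j → p j ≤ p i) :
    sSup (sepFidSet 4 p Bell) = p 0 + p 1 ∧
    sSup (sepPsSet 4 p Bell) = p 0 + p 1 := by
  have h01 := hord 0 1 (by decide)
  have h12 := hord 1 2 (by decide)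
  have h13 := hord 1 3 (by decide)
  constructor
  · apply le_antisymm
    · exact csSup_le ⟨_, mem_fid p⟩ (fun x hx => ub_fid p (hp 1) h01 h12 h13 x hx)
    · exact le_csSup ⟨p 0 + p 1, fun x hx => ub_fid p (hp 1) h01 h12 h13 x hx⟩ (mem_fid p)
  · apply le_antisymm
    · exact csSup_le ⟨_, mem_ps p⟩ (fun x hx => ub_ps p (hp 1) h01 h12 h13 x hx)
    · exact le_csSup ⟨p 0 + p 1, fun x hx => ub_ps p (hp 1) h01 h12 h13 x hx⟩ (mem_ps p)
end
end
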